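/- Let B' := B[λ_r^{−1}]. The smallest ℂ-linear subspace of B' containing e^φ and stable under all operators L_n (n ∈ ℤ), all ∂/∂λ_j and multiplication by λ_j (1 ≤ j ≤ r), and multiplication by λ_r^{−1}, equals e^φ·A[λ_1,…,λ_r][λ_r^{−1}] = { e^φ·f : f ∈ ℂ[x_1,x_2,…][λ_1,…,λ_r, λ_r^{−1}] }. (Equivalently: after localizing along the singular divisor {λ_r = 0}, the coherent state module generated from the coherent state e^φ by the Virasoro operators L_n and the differential operators in λ is the whole localized irregular Fock module; i.e. the Virasoro vertex algebra Vir_c is saturated in the Heisenberg vertex algebra with respect to the irregular Heisenberg vertex algebra F^{(r)}.) -/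

import Mathlib

/-!
STATEMENT 13.
Fix r ≥ 1 and ρ ∈ ℂ.  A := ℂ[x_1,x_2,…] (= `MvPolynomial ℕ ℂ`, variable `i`
is x_{i+1}).  B' := A[[λ_1,…,λ_r]][λ_r^{−1}] embeds in the space
W := ((Fin r →₀ ℤ) → A) of formal λ-expansions with integer exponents
(the coefficient of λ^d being an element of A); all the operators below
preserve B' ⊂ W, so the smallest stable subspace may be computed in W.
For i ∈ ℤ, a_i is: multiplication by x_{−i} for i < 0, i·∂/∂x_i for i > 0,
and 0 for i = 0.  For n ∈ ℤ,
  L_n := (1/2)·∑_{i∈ℤ} :a_i a_{n−i}: − ρ(n+1)·a_n,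
with :a_i a_j: := a_i∘a_j if i ≤ j and a_j∘a_i otherwise; on each coefficient
only finitely many terms are nonzero (realized by `finsum`), and L_n acts
coefficientwise in λ.  φ := ∑_{j=1}^r λ_j x_j/j, and e^φ ∈ W has coefficient
∏_j (x_j/j)^{d_j}/d_j! at λ^d (d ≥ 0).
CLAIM: the smallest ℂ-subspace of W containing e^φ and stable under all L_n
(n ∈ ℤ), all ∂/∂λ_j, multiplication by all λ_j (1 ≤ j ≤ r), and
multiplication by λ_r^{−1}, equals
  e^φ·A[λ_1,…,λ_r][λ_r^{−1}]
  = { e^φ·f : f a Laurent polynomial in λ with A-coefficients in which only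
      λ_r occurs with negative exponents }.
(The right-hand side is itself a subspace, so it equals its span.)
-/

noncomputable section

abbrev A : Type := MvPolynomial ℕ ℂ

/-- λ-Laurent expansions with coefficients in A. -/
abbrev W (r : ℕ) : Type := (Fin r →₀ ℤ) → A

/-- `a_i` on A: multiplication by `x_{−i}` for `i < 0`, `i·∂/∂x_i` for
`i > 0`, and `0` for `i = 0`. -/
def aZ (i : ℤ) (P : A) : A :=
  if i < 0 then MvPolynomial.X ((-i).toNat - 1) * P
  else ((i : ℂ)) • MvPolynomial.pderiv (i.toNat - 1) P

/-- The normally ordered product `:a_i a_j:`. -/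
def nop (i j : ℤ) (P : A) : A :=
  if i ≤ j then aZ i (aZ j P) else aZ j (aZ i P)

/-- `L_n := (1/2)·∑_{i∈ℤ} :a_i a_{n−i}: − ρ(n+1)·a_n` on A (the sum over i
is finitely supported on each polynomial; realized by `finsum`). -/
def LA (ρ : ℂ) (n : ℤ) (P : A) : A :=
  (1 / 2 : ℂ) • (∑ᶠ i : ℤ, nop i (n - i) P) - (ρ * ((n : ℂ) + 1)) • aZ n P

/-- Coefficientwise action of `L_n` on W. -/
def LW (r : ℕ) (ρ : ℂ) (n : ℤ) (w : W r) : W r := fun d => LA ρ n (w d)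

/-- `∂/∂λ_{j+1}` on W. -/
def dLamW (r : ℕ) (j : Fin r) (w : W r) : W r :=
  fun d => ((d j + 1 : ℤ) : ℂ) • w (d + Finsupp.single j 1)

/-- Multiplication by `λ_{j+1}` on W. -/
def mulLamW (r : ℕ) (j : Fin r) (w : W r) : W r :=
  fun d => w (d - Finsupp.single j 1)

/-- Multiplication by `λ_{j+1}^{−1}` on W. -/
def mulLamInvW (r : ℕ) (j : Fin r) (w : W r) : W r :=
  fun d => w (d + Finsupp.single j 1)

open Classical in
/-- `e^φ` for `φ = ∑_{j=1}^r λ_j x_j / j`: the coefficient of `λ^d` is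
`∏_j (x_j/j)^{d_j}/(d_j)!` when `d ≥ 0`, and `0` otherwise. -/
def ephiW (r : ℕ) : W r :=
  fun d =>
    if ∀ j, 0 ≤ d j then
      ∏ j : Fin r,
        (((((d j).toNat).factorial : ℂ) * ((((j : ℕ) : ℂ) + 1)) ^ ((d j).toNat))⁻¹) •
          (MvPolynomial.X (j : ℕ) : A) ^ ((d j).toNat)
    else 0

/-- Multiplication of `e^φ` by the λ-Laurent polynomial `f = ∑_m (f m)·λ^m`. -/
def EmulW (r : ℕ) (f : (Fin r →₀ ℤ) →₀ A) : W r :=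
  fun d => ∑ m ∈ f.support, f m * ephiW r (d - m)

-- ===================== auxiliary development =====================
open MvPolynomial Finsupp

namespace Aux

/-- basic linearity of aZ -/
lemma aZ_zero (i : ℤ) : aZ i (0 : A) = 0 := by
  unfold aZ; split <;> simp

lemma aZ_add (i : ℤ) (P Q : A) : aZ i (P + Q) = aZ i P + aZ i Q := by
  unfold aZ; split
  · ring
  · simp [smul_add]

lemma aZ_smul (i : ℤ) (c : ℂ) (P : A) : aZ i (c • P) = c • aZ i P := by
  unfold aZ; split
  · rw [mul_smul_comm]
  · rw [Derivation.map_smul, smul_comm]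

lemma aZ_of_neg {i : ℤ} (h : i < 0) (P : A) :
    aZ i P = MvPolynomial.X ((-i).toNat - 1) * P := by unfold aZ; rw [if_pos h]

lemma aZ_of_nonneg {i : ℤ} (h : 0 ≤ i) (P : A) :
    aZ i P = ((i : ℂ)) • MvPolynomial.pderiv (i.toNat - 1) P := by
  unfold aZ; rw [if_neg (by omega)]

lemma aZ_zero_op (P : A) : aZ 0 P = 0 := by
  rw [aZ_of_nonneg le_rfl]; simp

lemma nop_add (i j : ℤ) (P Q : A) : nop i j (P + Q) = nop i j P + nop i j Q := by
  unfold nop; split <;> rw [aZ_add, aZ_add]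

lemma nop_smul (i j : ℤ) (c : ℂ) (P : A) : nop i j (c • P) = c • nop i j P := by
  unfold nop; split <;> rw [aZ_smul, aZ_smul]

lemma nop_zero (i j : ℤ) : nop i j (0 : A) = 0 := by
  unfold nop; split <;> rw [aZ_zero, aZ_zero]

lemma nop_comm (i j : ℤ) (P : A) : nop i j P = nop j i P := by
  unfold nop
  rcases lt_trichotomy i j with h | h | h
  · rw [if_pos h.le, if_neg (by omega)]
  · subst h; simp
  · rw [if_neg (by omega), if_pos h.le]


/-- `good P J`: all annihilators with index `> J` kill `P`. -/
def good (P : A) (J : ℕ) : Prop := ∀ i : ℤ, (J : ℤ) < i → aZ i P = 0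

lemma good_mono {P : A} {J J' : ℕ} (h : good P J) (hJ : J ≤ J') : good P J' :=
  fun i hi => h i (by omega)

lemma pderiv_eq_zero_of_coord_zero {P : A} {k : ℕ}
    (h : ∀ s ∈ P.support, s k = 0) : MvPolynomial.pderiv k P = 0 := by
  conv_lhs => rw [P.as_sum]
  rw [map_sum]
  refine Finset.sum_eq_zero fun s hs => ?_
  rw [MvPolynomial.pderiv_monomial, h s hs, Nat.cast_zero, mul_zero, map_zero]

lemma exists_good (P : A) : ∃ J : ℕ, good P J := by
  refine ⟨(P.support.sup fun s => s.support.sup id) + 1, fun i hi => ?_⟩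
  have hi1 : (1 : ℤ) ≤ i := by omega
  rw [aZ_of_nonneg (by omega)]
  rw [pderiv_eq_zero_of_coord_zero (k := i.toNat - 1), smul_zero]
  intro s hs
  by_contra hc
  have hk : i.toNat - 1 ∈ s.support := Finsupp.mem_support_iff.2 hc
  have h1 : (i.toNat - 1 : ℕ) ≤ s.support.sup id := Finset.le_sup (f := id) hk
  have h2 : s.support.sup id ≤ P.support.sup fun s => s.support.sup id :=
    Finset.le_sup (f := fun s => s.support.sup id) hs
  omega

lemma nop_eq_zero_of_large {P : A} {J : ℕ} (hP : good P J) {i j : ℤ}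
    (h : (J : ℤ) < i ∨ (J : ℤ) < j) : nop i j P = 0 := by
  unfold nop
  split
  next hij =>
    have : (J : ℤ) < j := by omega
    rw [hP j this, aZ_zero]
  next hij =>
    have : (J : ℤ) < i := by omega
    rw [hP i this, aZ_zero]

lemma nop_support_subset {P : A} {J : ℕ} (hP : good P J) (n : ℤ) :
    (Function.support fun i : ℤ => nop i (n - i) P) ⊆
      ↑(Finset.Icc (n - (J : ℤ)) (J : ℤ)) := by
  intro i hi
  simp only [Function.mem_support] at hi
  simp only [Finset.coe_Icc, Set.mem_Icc]
  constructor
  · by_contra h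
    exact hi (nop_eq_zero_of_large hP (Or.inr (by omega)))
  · by_contra h
    exact hi (nop_eq_zero_of_large hP (Or.inl (by omega)))

lemma LA_eq_sum {P : A} {J : ℕ} (hP : good P J) (ρ : ℂ) (n : ℤ) :
    LA ρ n P = (1 / 2 : ℂ) • (∑ i ∈ Finset.Icc (n - (J : ℤ)) (J : ℤ), nop i (n - i) P)
      - (ρ * ((n : ℂ) + 1)) • aZ n P := by
  unfold LA
  rw [finsum_eq_sum_of_support_subset _ (nop_support_subset hP n)]

lemma LA_zero (ρ : ℂ) (n : ℤ) : LA ρ n (0 : A) = 0 := by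
  unfold LA
  have : (fun i : ℤ => nop i (n - i) (0:A)) = fun _ => 0 := by
    funext i; exact nop_zero _ _
  rw [this, finsum_zero, aZ_zero]; simp

lemma LA_add (ρ : ℂ) (n : ℤ) (P Q : A) : LA ρ n (P + Q) = LA ρ n P + LA ρ n Q := by
  obtain ⟨JP, hJP⟩ := exists_good P
  obtain ⟨JQ, hJQ⟩ := exists_good Q
  have hP : good P (max JP JQ) := good_mono hJP (le_max_left _ _)
  have hQ : good Q (max JP JQ) := good_mono hJQ (le_max_right _ _)
  have hPQ : good (P + Q) (max JP JQ) := fun i hi => by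
    rw [aZ_add, hP i hi, hQ i hi, add_zero]
  rw [LA_eq_sum hP ρ n, LA_eq_sum hQ ρ n, LA_eq_sum hPQ ρ n]
  have : ∀ i ∈ Finset.Icc (n - ((max JP JQ : ℕ) : ℤ)) ((max JP JQ : ℕ) : ℤ),
      nop i (n - i) (P + Q) = nop i (n - i) P + nop i (n - i) Q :=
    fun i _ => nop_add _ _ _ _
  rw [Finset.sum_congr rfl this, Finset.sum_add_distrib, aZ_add]
  rw [smul_add, smul_add]
  abel

lemma LA_smul (ρ : ℂ) (n : ℤ) (c : ℂ) (P : A) : LA ρ n (c • P) = c • LA ρ n P := by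
  obtain ⟨J, hJ⟩ := exists_good P
  have hcP : good (c • P) J := fun i hi => by rw [aZ_smul, hJ i hi, smul_zero]
  rw [LA_eq_sum hJ ρ n, LA_eq_sum hcP ρ n]
  have : ∀ i ∈ Finset.Icc (n - (J : ℤ)) (J : ℤ),
      nop i (n - i) (c • P) = c • nop i (n - i) P := fun i _ => nop_smul _ _ _ _
  rw [Finset.sum_congr rfl this, ← Finset.smul_sum, aZ_smul, smul_sub,
    smul_comm c, smul_comm c]


-- ===================== the coefficient polynomials E =====================

/-- `Finsupp.single` in the exponent lattice, with a fixed type. -/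
def sng {r : ℕ} (j : Fin r) : Fin r →₀ ℤ := Finsupp.single j 1

lemma sng_apply {r : ℕ} (j j' : Fin r) : sng j j' = if j = j' then 1 else 0 := by
  unfold sng
  rcases eq_or_ne j j' with h | h
  · subst h; rw [Finsupp.single_eq_same, if_pos rfl]
  · rw [Finsupp.single_eq_of_ne' h, if_neg h]

lemma sub_sng_apply {r : ℕ} (e : Fin r →₀ ℤ) (j j' : Fin r) :
    (e - sng j) j' = e j' - if j = j' then 1 else 0 := by
  rw [Finsupp.sub_apply, sng_apply]

/-- the scalar in front of the monomial of `ephiW` -/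
def cE (r : ℕ) (e : Fin r →₀ ℤ) : ℂ :=
  ∏ j : Fin r, ((((e j).toNat).factorial : ℂ) * ((((j : ℕ) : ℂ) + 1)) ^ ((e j).toNat))⁻¹

/-- the exponent of the monomial of `ephiW` -/
def DD (r : ℕ) (e : Fin r →₀ ℤ) : ℕ →₀ ℕ :=
  ∑ j : Fin r, Finsupp.single (j : ℕ) ((e j).toNat)

lemma DD_apply_coe {r : ℕ} (e : Fin r →₀ ℤ) (j : Fin r) :
    DD r e (j : ℕ) = (e j).toNat := by
  unfold DD
  rw [Finsupp.finset_sum_apply]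
  rw [Finset.sum_eq_single j]
  · simp
  · intro j' _ hne
    exact Finsupp.single_eq_of_ne' (fun h => hne (Fin.val_injective h))
  · simp

lemma DD_apply_ge {r : ℕ} (e : Fin r →₀ ℤ) (k : ℕ) (hk : r ≤ k) :
    DD r e k = 0 := by
  unfold DD
  rw [Finsupp.finset_sum_apply]
  refine Finset.sum_eq_zero fun j _ => ?_
  exact Finsupp.single_eq_of_ne (by omega)

lemma ephi_of_nonneg {r : ℕ} {e : Fin r →₀ ℤ} (h : ∀ j, 0 ≤ e j) :
    ephiW r e = cE r e • MvPolynomial.monomial (DD r e) 1 := by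
  unfold ephiW
  rw [if_pos h]
  have step : ∀ j : Fin r,
      ((((e j).toNat).factorial : ℂ) * ((((j : ℕ) : ℂ) + 1)) ^ ((e j).toNat))⁻¹ •
        (MvPolynomial.X (j : ℕ) : A) ^ ((e j).toNat)
      = MvPolynomial.C ((((e j).toNat).factorial : ℂ) *
          ((((j : ℕ) : ℂ) + 1)) ^ ((e j).toNat))⁻¹ *
          MvPolynomial.monomial (Finsupp.single (j : ℕ) ((e j).toNat)) 1 := by
    intro j
    rw [MvPolynomial.smul_eq_C_mul, MvPolynomial.X_pow_eq_monomial]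
  rw [Finset.prod_congr rfl (fun j _ => step j)]
  rw [Finset.prod_mul_distrib, ← map_prod, ← MvPolynomial.monomial_sum_one]
  rw [MvPolynomial.smul_eq_C_mul]
  rfl

lemma ephi_of_neg {r : ℕ} {e : Fin r →₀ ℤ} (h : ¬ ∀ j, 0 ≤ e j) :
    ephiW r e = 0 := by
  unfold ephiW; rw [if_neg h]

lemma sub_single_neg {r : ℕ} {e : Fin r →₀ ℤ} (h : ¬ ∀ j, 0 ≤ e j) (j : Fin r) :
    ¬ ∀ j', 0 ≤ (e - sng j) j' := by
  push_neg at h ⊢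
  obtain ⟨j0, hj0⟩ := h
  refine ⟨j0, ?_⟩
  rw [sub_sng_apply]
  split <;> omega

lemma DD_sub {r : ℕ} (e : Fin r →₀ ℤ) (j : Fin r) :
    DD r (e - sng j) = DD r e - Finsupp.single (j : ℕ) 1 := by
  ext k
  rw [Finsupp.tsub_apply]
  by_cases hk : k < r
  · have hkj : k = ((⟨k, hk⟩ : Fin r) : ℕ) := rfl
    rw [hkj, DD_apply_coe, DD_apply_coe]
    rcases eq_or_ne j ⟨k, hk⟩ with hh | hh
    · rw [sub_sng_apply, if_pos hh, ← hh, Finsupp.single_eq_same]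
      omega
    · rw [sub_sng_apply, if_neg hh,
        Finsupp.single_eq_of_ne' (fun hc => hh (Fin.val_injective hc))]
      omega
  · rw [DD_apply_ge _ _ (by omega), DD_apply_ge _ _ (by omega),
      Finsupp.single_eq_of_ne' (by omega : (j:ℕ) ≠ k)]
    omega

lemma cE_sub {r : ℕ} {e : Fin r →₀ ℤ} (j : Fin r) (h : ∀ j', 0 ≤ e j') (hj : 1 ≤ e j) :
    cE r (e - sng j)
      = ((((j : ℕ) : ℂ) + 1) * ((e j).toNat : ℂ)) * cE r e := by
  unfold cE
  rw [Finset.prod_eq_mul_prod_sdiff_singleton_of_mem (Finset.mem_univ j),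
    Finset.prod_eq_mul_prod_sdiff_singleton_of_mem (Finset.mem_univ j)]
  have hrest : ∀ j' ∈ Finset.univ \ {j},
      (((((e - sng j) j').toNat).factorial : ℂ) *
        ((((j' : ℕ) : ℂ) + 1)) ^ (((e - sng j) j').toNat))⁻¹
      = ((((e j').toNat).factorial : ℂ) *
        ((((j' : ℕ) : ℂ) + 1)) ^ ((e j').toNat))⁻¹ := by
    intro j' hj'
    have hne : j ≠ j' := by
      intro hh; subst hh; simp at hj'
    rw [sub_sng_apply, if_neg hne, sub_zero]
  rw [Finset.prod_congr rfl hrest]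
  rw [← mul_assoc]
  congr 1
  have hejj : ((e - sng j) j).toNat = (e j).toNat - 1 := by
    rw [sub_sng_apply, if_pos rfl]; omega
  rw [hejj]
  set d : ℕ := (e j).toNat with hd
  have hd1 : 1 ≤ d := by omega
  have hfac : (d.factorial : ℂ) = (d : ℂ) * ((d-1).factorial : ℂ) := by
    rw [← Nat.cast_mul]
    congr 1
    rw [← Nat.succ_pred_eq_of_pos (by omega : 0 < d), Nat.factorial_succ]
    congr 1 <;> omega
  have hpow : ((((j : ℕ) : ℂ) + 1)) ^ d
      = (((j : ℕ) : ℂ) + 1) * (((j : ℕ) : ℂ) + 1) ^ (d - 1) := by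
    rw [← pow_succ']
    congr 1; omega
  have hjne : (((j : ℕ) : ℂ) + 1) ≠ 0 := Nat.cast_add_one_ne_zero (j : ℕ)
  have hfne : ((d - 1).factorial : ℂ) ≠ 0 := Nat.cast_ne_zero.2 (Nat.factorial_ne_zero _)
  have hfne2 : ((d).factorial : ℂ) ≠ 0 := Nat.cast_ne_zero.2 (Nat.factorial_ne_zero _)
  have hdne : (d : ℂ) ≠ 0 := Nat.cast_ne_zero.2 (by omega)
  have hpne : ((((j : ℕ) : ℂ) + 1)) ^ (d-1) ≠ 0 := pow_ne_zero _ hjne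
  field_simp
  rw [hfac, hpow]
  ring

lemma nonneg_sub_sng {r : ℕ} {e : Fin r →₀ ℤ} (h : ∀ j', 0 ≤ e j') {j : Fin r}
    (hj : 1 ≤ e j) : ∀ j', 0 ≤ (e - sng j) j' := by
  intro j'
  rw [sub_sng_apply]
  rcases eq_or_ne j j' with hh | hh
  · subst hh; rw [if_pos rfl]; omega
  · rw [if_neg hh]; have := h j'; omega

/-- the fundamental derivative identity for the coefficients of `e^φ`. -/
lemma pderiv_ephi {r : ℕ} (j : Fin r) (e : Fin r →₀ ℤ) :
    (((j : ℕ) : ℂ) + 1) • MvPolynomial.pderiv (j : ℕ) (ephiW r e)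
      = ephiW r (e - sng j) := by
  by_cases h : ∀ j', 0 ≤ e j'
  · by_cases hj : 1 ≤ e j
    · rw [ephi_of_nonneg h, ephi_of_nonneg (nonneg_sub_sng h hj), Derivation.map_smul,
        MvPolynomial.pderiv_monomial, DD_apply_coe, one_mul, DD_sub, cE_sub j h hj]
      rw [MvPolynomial.smul_monomial, MvPolynomial.smul_monomial, MvPolynomial.smul_monomial]
      congr 1
      rw [smul_eq_mul, smul_eq_mul, smul_eq_mul]
      ring
    · have hej : e j = 0 := le_antisymm (by omega) (h j)
      have h' : ¬ ∀ j', 0 ≤ (e - sng j) j' := by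
        push_neg
        exact ⟨j, by rw [sub_sng_apply, if_pos rfl]; omega⟩
      rw [ephi_of_nonneg h, ephi_of_neg h', Derivation.map_smul,
        MvPolynomial.pderiv_monomial, DD_apply_coe]
      have : (e j).toNat = 0 := by omega
      rw [this]
      simp
  · rw [ephi_of_neg h, ephi_of_neg (sub_single_neg h j), map_zero, smul_zero]

/-- the fundamental multiplication identity for the coefficients of `e^φ`. -/
lemma X_mul_ephi {r : ℕ} (j : Fin r) (e : Fin r →₀ ℤ) :
    ((e j : ℤ) : ℂ) • ephiW r e
      = ((((j : ℕ) : ℂ) + 1))⁻¹ • (MvPolynomial.X (j : ℕ) * ephiW r (e - sng j)) := by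
  by_cases h : ∀ j', 0 ≤ e j'
  · by_cases hj : 1 ≤ e j
    · rw [ephi_of_nonneg h, ephi_of_nonneg (nonneg_sub_sng h hj), DD_sub, cE_sub j h hj]
      have hX : (MvPolynomial.X (j:ℕ) : A)
          = MvPolynomial.monomial (Finsupp.single (j:ℕ) 1) 1 := by
        rw [← MvPolynomial.X_pow_eq_monomial, pow_one]
      have hle : Finsupp.single (j:ℕ) 1 ≤ DD r e := by
        rw [Finsupp.single_le_iff, DD_apply_coe]
        omega
      rw [hX, mul_smul_comm, MvPolynomial.monomial_mul, one_mul, add_tsub_cancel_of_le hle,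
        MvPolynomial.smul_monomial, MvPolynomial.smul_monomial, MvPolynomial.smul_monomial,
        MvPolynomial.smul_monomial]
      congr 1
      have hcast : ((e j : ℤ) : ℂ) = ((e j).toNat : ℂ) := by
        have h2 : e j = ((e j).toNat : ℤ) := by omega
        exact_mod_cast congrArg (fun z : ℤ => (z : ℂ)) h2
      rw [hcast, smul_eq_mul, smul_eq_mul, smul_eq_mul, smul_eq_mul]
      have hjne : (((j : ℕ) : ℂ) + 1) ≠ 0 := Nat.cast_add_one_ne_zero (j : ℕ)
      field_simp
    · have hej : e j = 0 := le_antisymm (by omega) (h j)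
      have h' : ¬ ∀ j', 0 ≤ (e - sng j) j' := by
        push_neg
        exact ⟨j, by rw [sub_sng_apply, if_pos rfl]; omega⟩
      rw [ephi_of_neg h', hej]
      simp
  · rw [ephi_of_neg h, ephi_of_neg (sub_single_neg h j)]
    simp


-- ===================== shift operators and the product formula =====================

/-- shifted `E`-coefficient appearing when `a_i` hits `e^φ`; zero unless `1 ≤ i ≤ r`. -/
def shE (r : ℕ) (i : ℤ) (e : Fin r →₀ ℤ) : A :=
  if h : 1 ≤ i ∧ i ≤ (r : ℤ) then ephiW r (e - sng ⟨(i - 1).toNat, by omega⟩) else 0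

lemma shE_of_not {r : ℕ} {i : ℤ} (h : ¬(1 ≤ i ∧ i ≤ (r : ℤ))) (e : Fin r →₀ ℤ) :
    shE r i e = 0 := dif_neg h

lemma shE_coe {r : ℕ} (j : Fin r) (e : Fin r →₀ ℤ) :
    shE r (((j : ℕ) : ℤ) + 1) e = ephiW r (e - sng j) := by
  have h : 1 ≤ ((j : ℕ) : ℤ) + 1 ∧ ((j : ℕ) : ℤ) + 1 ≤ (r : ℤ) := by
    have := j.isLt; omega
  rw [shE, dif_pos h]
  have hjl := j.isLt
  exact congrArg (fun z : Fin r => ephiW r (e - sng z))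
    (Fin.ext (show ((((j : ℕ) : ℤ) + 1 - 1).toNat) = (j : ℕ) by omega))

lemma pderiv_ephi_ge {r : ℕ} {k : ℕ} (hk : r ≤ k) (e : Fin r →₀ ℤ) :
    MvPolynomial.pderiv k (ephiW r e) = 0 := by
  by_cases h : ∀ j', 0 ≤ e j'
  · rw [ephi_of_nonneg h, Derivation.map_smul, MvPolynomial.pderiv_monomial,
      DD_apply_ge _ _ hk]
    simp
  · rw [ephi_of_neg h, map_zero]

lemma smul_pderiv_ephi {r : ℕ} {i : ℤ} (hi : 1 ≤ i) (e : Fin r →₀ ℤ) :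
    (i : ℂ) • MvPolynomial.pderiv (i.toNat - 1) (ephiW r e) = shE r i e := by
  by_cases hir : i ≤ (r : ℤ)
  · set j : Fin r := ⟨(i - 1).toNat, by omega⟩ with hj
    have hi' : i = ((j : ℕ) : ℤ) + 1 := by
      have : (j : ℕ) = (i - 1).toNat := rfl
      omega
    have hk : i.toNat - 1 = (j : ℕ) := by
      have : (j : ℕ) = (i - 1).toNat := rfl
      omega
    have hc : (i : ℂ) = ((j : ℕ) : ℂ) + 1 := by
      rw [hi']; push_cast; ring
    rw [hk, hc, pderiv_ephi j e, hi', shE_coe]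
  · rw [shE_of_not (by omega), pderiv_ephi_ge (by omega) e, smul_zero]

/-- conjugating `a_i` past the `E`-coefficient. -/
lemma aZ_mul_ephi {r : ℕ} (i : ℤ) (P : A) (e : Fin r →₀ ℤ) :
    aZ i (P * ephiW r e) = aZ i P * ephiW r e + P * shE r i e := by
  rcases lt_trichotomy i 0 with h | h | h
  · rw [aZ_of_neg h, aZ_of_neg h, shE_of_not (by omega), mul_zero, add_zero, mul_assoc]
  · subst h
    rw [aZ_zero_op, aZ_zero_op, shE_of_not (by omega), mul_zero, add_zero, zero_mul]
  · rw [aZ_of_nonneg h.le, aZ_of_nonneg h.le, MvPolynomial.pderiv_mul, smul_add,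
      smul_mul_assoc, ← smul_pderiv_ephi (by omega : (1:ℤ) ≤ i) e, mul_smul_comm]

/-- double-shifted `E`; zero unless both indices lie in `[1, r]`. -/
def shE2 (r : ℕ) (i j : ℤ) (e : Fin r →₀ ℤ) : A :=
  if h : 1 ≤ i ∧ i ≤ (r : ℤ) then shE r j (e - sng ⟨(i - 1).toNat, by omega⟩) else 0

lemma shE2_of_not {r : ℕ} {i : ℤ} (j : ℤ) (h : ¬(1 ≤ i ∧ i ≤ (r : ℤ))) (e : Fin r →₀ ℤ) :
    shE2 r i j e = 0 := dif_neg h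

lemma shE2_comm {r : ℕ} (i j : ℤ) (e : Fin r →₀ ℤ) :
    shE2 r i j e = shE2 r j i e := by
  unfold shE2
  by_cases hi : 1 ≤ i ∧ i ≤ (r : ℤ) <;> by_cases hj : 1 ≤ j ∧ j ≤ (r : ℤ)
  · rw [dif_pos hi, dif_pos hj]
    unfold shE
    rw [dif_pos hj, dif_pos hi]
    rw [sub_right_comm]
  · rw [dif_pos hi, dif_neg hj, shE_of_not hj]
  · rw [dif_neg hi, dif_pos hj, shE_of_not hi]
  · rw [dif_neg hi, dif_neg hj]

lemma aZ_mul_shE {r : ℕ} (i j : ℤ) (P : A) (e : Fin r →₀ ℤ) :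
    aZ i (P * shE r j e) = aZ i P * shE r j e + P * shE2 r j i e := by
  unfold shE shE2
  by_cases hj : 1 ≤ j ∧ j ≤ (r : ℤ)
  · rw [dif_pos hj, dif_pos hj, aZ_mul_ephi]
  · rw [dif_neg hj, dif_neg hj]
    simp [aZ_zero]

lemma nop_mul_ephi_le {r : ℕ} {i j : ℤ} (hle : i ≤ j) (P : A) (e : Fin r →₀ ℤ) :
    nop i j (P * ephiW r e) = nop i j P * ephiW r e + aZ j P * shE r i e
      + aZ i P * shE r j e + P * shE2 r i j e := by
  have h1 : nop i j (P * ephiW r e) = aZ i (aZ j (P * ephiW r e)) := by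
    unfold nop; rw [if_pos hle]
  have h2 : nop i j P = aZ i (aZ j P) := by
    unfold nop; rw [if_pos hle]
  rw [h1, h2, aZ_mul_ephi j P e, aZ_add, aZ_mul_ephi i (aZ j P) e, aZ_mul_shE i j P e,
    shE2_comm (r := r) j i e]
  ring

lemma nop_mul_ephi {r : ℕ} (i j : ℤ) (P : A) (e : Fin r →₀ ℤ) :
    nop i j (P * ephiW r e) = nop i j P * ephiW r e + aZ j P * shE r i e
      + aZ i P * shE r j e + P * shE2 r i j e := by
  rcases le_or_gt i j with h | h
  · exact nop_mul_ephi_le h P e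
  · rw [nop_comm i j, nop_comm i j (P := P), nop_mul_ephi_le h.le P e, shE2_comm (r := r) j i e]
    ring

lemma good_mul_ephi {r : ℕ} {P : A} {J : ℕ} (hP : good P J) (hrJ : r ≤ J)
    (e : Fin r →₀ ℤ) : good (P * ephiW r e) J := by
  intro i hi
  rw [aZ_mul_ephi, hP i hi, zero_mul, zero_add, shE_of_not (by omega), mul_zero]

/-- identification of `Fin r` with the integer interval `[1, r]`. -/
def finEmb (r : ℕ) : Fin r ↪ ℤ where
  toFun j := ((j : ℕ) : ℤ) + 1
  inj' a b h := by
    simp only at h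
    exact Fin.ext (by omega)

lemma map_univ_finEmb (r : ℕ) :
    Finset.univ.map (finEmb r) = Finset.Icc (1 : ℤ) (r : ℤ) := by
  ext i
  simp only [Finset.mem_map, Finset.mem_Icc, Finset.mem_univ, true_and]
  constructor
  · rintro ⟨j, -, rfl⟩
    have := j.isLt
    show 1 ≤ ((j : ℕ) : ℤ) + 1 ∧ ((j : ℕ) : ℤ) + 1 ≤ (r : ℤ)
    omega
  · intro hi
    refine ⟨⟨(i - 1).toNat, by omega⟩, ?_⟩
    show ((((i - 1).toNat : ℕ) : ℤ) + 1) = i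
    omega

lemma sum_T_fin {r : ℕ} {T : Finset ℤ} (hT : Finset.Icc (1 : ℤ) (r : ℤ) ⊆ T)
    (F : ℤ → A) (hF : ∀ i, ¬(1 ≤ i ∧ i ≤ (r : ℤ)) → F i = 0) :
    ∑ i ∈ T, F i = ∑ j : Fin r, F (((j : ℕ) : ℤ) + 1) := by
  rw [← Finset.sum_subset hT (fun i _ hi => hF i (by
    simp only [Finset.mem_Icc] at hi; omega))]
  rw [← map_univ_finEmb r, Finset.sum_map]
  rfl

/-- reflected version, identifying `Fin r` with `[n-r, n-1]` via `j ↦ n-(j+1)`. -/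
def finEmb' (r : ℕ) (n : ℤ) : Fin r ↪ ℤ where
  toFun j := n - (((j : ℕ) : ℤ) + 1)
  inj' a b h := by
    simp only at h
    exact Fin.ext (by omega)

lemma map_univ_finEmb' (r : ℕ) (n : ℤ) :
    Finset.univ.map (finEmb' r n) = Finset.Icc (n - (r : ℤ)) (n - 1) := by
  ext i
  simp only [Finset.mem_map, Finset.mem_Icc, Finset.mem_univ, true_and]
  constructor
  · rintro ⟨j, -, rfl⟩
    have := j.isLt
    show n - (((j : ℕ) : ℤ) + 1) ≥ n - (r:ℤ) ∧ n - (((j : ℕ) : ℤ) + 1) ≤ n - 1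
    omega
  · intro hi
    refine ⟨⟨(n - i - 1).toNat, by omega⟩, ?_⟩
    show n - ((((n - i - 1).toNat : ℕ) : ℤ) + 1) = i
    omega

lemma sum_T_fin' {r : ℕ} {T : Finset ℤ} {n : ℤ}
    (hT : Finset.Icc (n - (r : ℤ)) (n - 1) ⊆ T)
    (F : ℤ → A) (hF : ∀ i, ¬(1 ≤ n - i ∧ n - i ≤ (r : ℤ)) → F i = 0) :
    ∑ i ∈ T, F i = ∑ j : Fin r, F (n - (((j : ℕ) : ℤ) + 1)) := by
  rw [← Finset.sum_subset hT (fun i _ hi => hF i (by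
    simp only [Finset.mem_Icc] at hi; omega))]
  rw [← map_univ_finEmb' r n, Finset.sum_map]
  rfl


/-- THE MAIN CONJUGATION FORMULA: `L_n` applied to `P·E_e`. -/
lemma LA_mul_ephi {r : ℕ} (ρ : ℂ) (n : ℤ) (P : A) (e : Fin r →₀ ℤ) :
    LA ρ n (P * ephiW r e) = LA ρ n P * ephiW r e
      + ∑ j : Fin r, aZ (n - (((j : ℕ) : ℤ) + 1)) P * ephiW r (e - sng j)
      + (1 / 2 : ℂ) • ∑ j : Fin r, P * shE r (n - (((j : ℕ) : ℤ) + 1)) (e - sng j)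
      - (ρ * ((n : ℂ) + 1)) • (P * shE r n e) := by
  obtain ⟨J0, hJ0⟩ := exists_good P
  obtain ⟨J, hJr, hJn, hJ0'⟩ : ∃ J : ℕ, r ≤ J ∧ n.natAbs ≤ J ∧ J0 ≤ J :=
    ⟨J0 + r + n.natAbs + 1, by omega, by omega, by omega⟩
  have hJP : good P J := good_mono hJ0 (by omega)
  have hJPE : good (P * ephiW r e) J := good_mul_ephi hJP (by omega) e
  rw [LA_eq_sum hJPE ρ n, LA_eq_sum hJP ρ n]
  have hT1 : Finset.Icc (1 : ℤ) (r : ℤ) ⊆ Finset.Icc (n - (J : ℤ)) (J : ℤ) := by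
    intro x hx
    simp only [Finset.mem_Icc] at hx ⊢
    omega
  have hT2 : Finset.Icc (n - (r : ℤ)) (n - 1) ⊆ Finset.Icc (n - (J : ℤ)) (J : ℤ) := by
    intro x hx
    simp only [Finset.mem_Icc] at hx ⊢
    omega
  have hsplit : ∀ i ∈ Finset.Icc (n - (J : ℤ)) (J : ℤ), nop i (n - i) (P * ephiW r e)
      = nop i (n - i) P * ephiW r e + aZ (n - i) P * shE r i e
        + aZ i P * shE r (n - i) e + P * shE2 r i (n - i) e :=
    fun i _ => nop_mul_ephi i (n - i) P e
  rw [Finset.sum_congr rfl hsplit, Finset.sum_add_distrib, Finset.sum_add_distrib,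
    Finset.sum_add_distrib, ← Finset.sum_mul]
  have hS2 : (∑ i ∈ Finset.Icc (n - (J : ℤ)) (J : ℤ), aZ (n - i) P * shE r i e)
      = ∑ j : Fin r, aZ (n - (((j : ℕ) : ℤ) + 1)) P * ephiW r (e - sng j) := by
    rw [sum_T_fin hT1 _ (fun i hi => by rw [shE_of_not hi, mul_zero])]
    exact Finset.sum_congr rfl fun j _ => by rw [shE_coe]
  have hS3 : (∑ i ∈ Finset.Icc (n - (J : ℤ)) (J : ℤ), aZ i P * shE r (n - i) e)
      = ∑ j : Fin r, aZ (n - (((j : ℕ) : ℤ) + 1)) P * ephiW r (e - sng j) := by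
    rw [sum_T_fin' hT2 _ (fun i hi => by rw [shE_of_not hi, mul_zero])]
    refine Finset.sum_congr rfl fun j _ => ?_
    have : n - (n - (((j : ℕ) : ℤ) + 1)) = ((j : ℕ) : ℤ) + 1 := by ring
    rw [this, shE_coe]
  have hS4 : (∑ i ∈ Finset.Icc (n - (J : ℤ)) (J : ℤ), P * shE2 r i (n - i) e)
      = ∑ j : Fin r, P * shE r (n - (((j : ℕ) : ℤ) + 1)) (e - sng j) := by
    rw [sum_T_fin hT1 _ (fun i hi => by rw [shE2_of_not _ hi, mul_zero])]
    refine Finset.sum_congr rfl fun j _ => ?_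
    have hc : 1 ≤ (((j : ℕ) : ℤ) + 1) ∧ (((j : ℕ) : ℤ) + 1) ≤ (r : ℤ) := by
      have := j.isLt; omega
    rw [shE2, dif_pos hc]
    have hjl := j.isLt
    exact congrArg (fun z : Fin r => P * shE r (n - (((j : ℕ) : ℤ) + 1)) (e - sng z))
      (Fin.ext (show ((((j : ℕ) : ℤ) + 1 - 1).toNat) = (j : ℕ) by omega))
  rw [hS2, hS3, hS4, aZ_mul_ephi n P e, sub_mul, smul_mul_assoc, smul_mul_assoc]
  module


-- ===================== EmulW basic lemmas =====================

lemma EmulW_single_apply {r : ℕ} (m : Fin r →₀ ℤ) (P : A) (d : Fin r →₀ ℤ) :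
    EmulW r (Finsupp.single m P) d = P * ephiW r (d - m) := by
  show (Finsupp.single m P).sum (fun m' a => a * ephiW r (d - m')) = _
  rw [Finsupp.sum_single_index]
  rw [zero_mul]

lemma EmulW_add {r : ℕ} (f g : (Fin r →₀ ℤ) →₀ A) :
    EmulW r (f + g) = EmulW r f + EmulW r g := by
  funext d
  show (f + g).sum (fun m' a => a * ephiW r (d - m')) = _
  rw [Finsupp.sum_add_index (by intro m _; rw [zero_mul]) (by intro m _ a b; rw [add_mul])]
  rfl

lemma EmulW_zero {r : ℕ} : EmulW r 0 = 0 := by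
  funext d
  show (0 : (Fin r →₀ ℤ) →₀ A).sum (fun m' a => a * ephiW r (d - m')) = 0
  rw [Finsupp.sum_zero_index]

lemma EmulW_smul {r : ℕ} (c : ℂ) (f : (Fin r →₀ ℤ) →₀ A) :
    EmulW r (c • f) = c • EmulW r f := by
  funext d
  show ∑ m ∈ (c • f).support, (c • f) m * ephiW r (d - m)
      = c • ∑ m ∈ f.support, f m * ephiW r (d - m)
  rw [Finset.smul_sum]
  rw [Finset.sum_subset Finsupp.support_smul
    (fun m _ hm => by rw [Finsupp.notMem_support_iff.1 hm, zero_mul])]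
  refine Finset.sum_congr rfl fun m _ => ?_
  rw [Finsupp.smul_apply, smul_mul_assoc]

lemma EmulW_sub {r : ℕ} (f g : (Fin r →₀ ℤ) →₀ A) :
    EmulW r (f - g) = EmulW r f - EmulW r g := by
  have h := EmulW_add (f - g) g
  rw [sub_add_cancel] at h
  rw [h]
  abel

lemma EmulW_sum {r : ℕ} {α : Type*} (s : Finset α) (f : α → ((Fin r →₀ ℤ) →₀ A)) :
    EmulW r (∑ x ∈ s, f x) = ∑ x ∈ s, EmulW r (f x) := by
  classical
  induction s using Finset.induction_on with
  | empty => simp [EmulW_zero]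
  | insert _ _ hx ih => rw [Finset.sum_insert hx, Finset.sum_insert hx, EmulW_add, ih]

lemma ephiW_eq {r : ℕ} : ephiW r = EmulW r (Finsupp.single 0 1) := by
  funext d
  rw [EmulW_single_apply, one_mul, sub_zero]

-- ===================== operator identities on EmulW-singles =====================

lemma mulLamW_single {r : ℕ} (j : Fin r) (m : Fin r →₀ ℤ) (P : A) :
    mulLamW r j (EmulW r (Finsupp.single m P))
      = EmulW r (Finsupp.single (m + sng j) P) := by
  funext d
  show EmulW r (Finsupp.single m P) (d - Finsupp.single j 1) = _
  rw [EmulW_single_apply, EmulW_single_apply]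
  exact congrArg (fun z => P * ephiW r z) (by unfold sng; abel)

lemma mulLamInvW_single {r : ℕ} (j : Fin r) (m : Fin r →₀ ℤ) (P : A) :
    mulLamInvW r j (EmulW r (Finsupp.single m P))
      = EmulW r (Finsupp.single (m - sng j) P) := by
  funext d
  show EmulW r (Finsupp.single m P) (d + Finsupp.single j 1) = _
  rw [EmulW_single_apply, EmulW_single_apply]
  exact congrArg (fun z => P * ephiW r z) (by unfold sng; abel)

lemma dLamW_single {r : ℕ} (j : Fin r) (m : Fin r →₀ ℤ) (P : A) :
    dLamW r j (EmulW r (Finsupp.single m P))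
      = EmulW r (Finsupp.single m (((((j : ℕ) : ℂ) + 1))⁻¹ • (MvPolynomial.X (j : ℕ) * P))
          + ((m j : ℤ) : ℂ) • Finsupp.single (m - sng j) P) := by
  funext d
  show ((d j + 1 : ℤ) : ℂ) • EmulW r (Finsupp.single m P) (d + Finsupp.single j 1) = _
  rw [EmulW_single_apply]
  have he : ((d j + 1 : ℤ) : ℂ) = (((d + sng j - m) j : ℤ) : ℂ) + ((m j : ℤ) : ℂ) := by
    have h0 : d j + 1 = (d + sng j - m) j + m j := by
      rw [Finsupp.sub_apply, Finsupp.add_apply]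
      unfold sng; rw [Finsupp.single_eq_same]; ring
    rw [h0]; push_cast; ring
  have harg : d + Finsupp.single j 1 - m = d + sng j - m := rfl
  rw [harg, he, add_smul, EmulW_add]
  rw [Pi.add_apply, EmulW_smul, Pi.smul_apply, EmulW_single_apply, EmulW_single_apply]
  congr 1
  · rw [← mul_smul_comm, X_mul_ephi j (d + sng j - m),
      show d + sng j - m - sng j = d - m by abel,
      mul_smul_comm, smul_mul_assoc]
    congr 1
    ring
  · exact congrArg _ (congrArg (fun z => P * ephiW r z) (by abel))


-- ===================== LW on singles =====================

/-- the quadratic correction term of `L_n` (a double λ-shift). -/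
def G3 (r : ℕ) (n : ℤ) (m : Fin r →₀ ℤ) (P : A) (j : Fin r) : (Fin r →₀ ℤ) →₀ A :=
  if h : 1 ≤ n - (((j : ℕ) : ℤ) + 1) ∧ n - (((j : ℕ) : ℤ) + 1) ≤ (r : ℤ) then
    Finsupp.single (m + sng j + sng ⟨(n - (((j : ℕ) : ℤ) + 1) - 1).toNat, by omega⟩) P
  else 0

/-- the linear correction term of `L_n` (a single λ-shift). -/
def G4 (r : ℕ) (n : ℤ) (m : Fin r →₀ ℤ) (P : A) : (Fin r →₀ ℤ) →₀ A :=
  if h : 1 ≤ n ∧ n ≤ (r : ℤ) then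
    Finsupp.single (m + sng ⟨(n - 1).toNat, by omega⟩) P
  else 0

/-- the full Finsupp-level form of `L_n (e^φ λ^m P)`. -/
def GG (r : ℕ) (ρ : ℂ) (n : ℤ) (m : Fin r →₀ ℤ) (P : A) : (Fin r →₀ ℤ) →₀ A :=
  Finsupp.single m (LA ρ n P)
    + ∑ j : Fin r, Finsupp.single (m + sng j) (aZ (n - (((j : ℕ) : ℤ) + 1)) P)
    + (1 / 2 : ℂ) • ∑ j : Fin r, G3 r n m P j
    - (ρ * ((n : ℂ) + 1)) • G4 r n m P

lemma G3_apply {r : ℕ} (n : ℤ) (m : Fin r →₀ ℤ) (P : A) (j : Fin r) (d : Fin r →₀ ℤ) :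
    EmulW r (G3 r n m P j) d = P * shE r (n - (((j : ℕ) : ℤ) + 1)) (d - m - sng j) := by
  unfold G3 shE
  by_cases h : 1 ≤ n - (((j : ℕ) : ℤ) + 1) ∧ n - (((j : ℕ) : ℤ) + 1) ≤ (r : ℤ)
  · rw [dif_pos h, dif_pos h, EmulW_single_apply]
    exact congrArg (fun z => P * ephiW r z) (by abel)
  · rw [dif_neg h, dif_neg h, EmulW_zero, mul_zero]
    rfl

lemma G4_apply {r : ℕ} (n : ℤ) (m : Fin r →₀ ℤ) (P : A) (d : Fin r →₀ ℤ) :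
    EmulW r (G4 r n m P) d = P * shE r n (d - m) := by
  unfold G4 shE
  by_cases h : 1 ≤ n ∧ n ≤ (r : ℤ)
  · rw [dif_pos h, dif_pos h, EmulW_single_apply]
    exact congrArg (fun z => P * ephiW r z) (by abel)
  · rw [dif_neg h, dif_neg h, EmulW_zero, mul_zero]
    rfl

lemma LW_single {r : ℕ} (ρ : ℂ) (n : ℤ) (m : Fin r →₀ ℤ) (P : A) :
    LW r ρ n (EmulW r (Finsupp.single m P)) = EmulW r (GG r ρ n m P) := by
  funext d
  show LA ρ n (EmulW r (Finsupp.single m P) d) = _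
  rw [EmulW_single_apply, LA_mul_ephi ρ n P (d - m)]
  unfold GG
  rw [EmulW_sub, EmulW_add, EmulW_add, EmulW_smul, EmulW_smul, EmulW_sum, EmulW_sum]
  rw [Pi.sub_apply, Pi.add_apply, Pi.add_apply, Pi.smul_apply, Pi.smul_apply,
    Finset.sum_apply, Finset.sum_apply, EmulW_single_apply]
  congr 1
  congr 1
  congr 1
  · -- linear shift sum
    refine Finset.sum_congr rfl fun j _ => ?_
    rw [EmulW_single_apply]
    exact congrArg (fun z => aZ (n - (((j : ℕ) : ℤ) + 1)) P * ephiW r z) (by abel)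
  · -- quadratic shift sum
    congr 1
    refine Finset.sum_congr rfl fun j _ => ?_
    rw [G3_apply]
  · -- rho term
    congr 1
    rw [G4_apply]


-- ===================== weights =====================

/-- weight of a monomial exponent: `x_{i+1}` has weight `i+1`. -/
def wdeg (α : ℕ →₀ ℕ) : ℕ := α.sum fun i c => (i + 1) * c

lemma wdeg_add (a b : ℕ →₀ ℕ) : wdeg (a + b) = wdeg a + wdeg b := by
  unfold wdeg
  rw [Finsupp.sum_add_index]
  · intro i _; rw [mul_zero]
  · intro i _ x y; rw [mul_add]

lemma wdeg_single (i c : ℕ) : wdeg (Finsupp.single i c) = (i + 1) * c := by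
  unfold wdeg
  rw [Finsupp.sum_single_index]
  rw [mul_zero]

/-- `P` only contains monomials of weight `≤ W`. -/
def WBZ (P : A) (Wt : ℤ) : Prop := ∀ γ ∈ P.support, (wdeg γ : ℤ) ≤ Wt

lemma WBZ_mono {P : A} {Wt Wt' : ℤ} (h : WBZ P Wt) (hle : Wt ≤ Wt') : WBZ P Wt' :=
  fun γ hγ => le_trans (h γ hγ) hle

lemma WBZ_exists (P : A) : ∃ Wt : ℕ, WBZ P (Wt : ℤ) :=
  ⟨P.support.sup wdeg, fun γ hγ => by exact_mod_cast Finset.le_sup (f := wdeg) hγ⟩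

lemma WBZ_monomial {β : ℕ →₀ ℕ} {c : ℂ} {Wt : ℤ} (h : (wdeg β : ℤ) ≤ Wt) :
    WBZ (MvPolynomial.monomial β c) Wt := by
  intro γ hγ
  classical
  rw [MvPolynomial.support_monomial] at hγ
  rcases eq_or_ne c 0 with hc | hc
  · rw [if_pos hc] at hγ; exact absurd hγ (Finset.notMem_empty _)
  · rw [if_neg hc, Finset.mem_singleton] at hγ; subst hγ; exact h

lemma WBZ_smul {P : A} {c : ℂ} {Wt : ℤ} (h : WBZ P Wt) : WBZ (c • P) Wt :=
  fun γ hγ => h γ (MvPolynomial.support_smul hγ)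

lemma WBZ_pderiv {P : A} {k : ℕ} {Wt : ℤ} (h : WBZ P Wt) :
    WBZ (MvPolynomial.pderiv k P) (Wt - ((k : ℤ) + 1)) := by
  intro γ hγ
  classical
  rw [P.as_sum, map_sum] at hγ
  obtain ⟨v, hv, hγv⟩ := Finset.mem_biUnion.1 (MvPolynomial.support_sum hγ)
  rw [MvPolynomial.pderiv_monomial] at hγv
  rw [MvPolynomial.support_monomial] at hγv
  split at hγv
  · exact absurd hγv (Finset.notMem_empty _)
  next hc =>
    have hvk : v k ≠ 0 := by
      intro h0
      exact hc (by rw [h0, Nat.cast_zero, mul_zero])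
    rw [Finset.mem_singleton] at hγv
    subst hγv
    have hv' : v = (v - Finsupp.single k 1) + Finsupp.single k 1 := by
      ext i
      rw [Finsupp.add_apply, Finsupp.tsub_apply]
      rcases eq_or_ne k i with hh | hh
      · subst hh; rw [Finsupp.single_eq_same]; omega
      · rw [Finsupp.single_eq_of_ne' hh]; omega
    have hw : wdeg v = wdeg (v - Finsupp.single k 1) + (k + 1) := by
      conv_lhs => rw [hv']
      rw [wdeg_add, wdeg_single, mul_one]
    have := h v hv
    omega

lemma WBZ_aZ {P : A} {i : ℤ} {Wt : ℤ} (h : WBZ P Wt) : WBZ (aZ i P) (Wt - i) := by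
  rcases lt_trichotomy i 0 with hi | hi | hi
  · rw [aZ_of_neg hi]
    intro γ hγ
    rw [MvPolynomial.support_X_mul] at hγ
    obtain ⟨γ', hγ', rfl⟩ := Finset.mem_map.1 hγ
    have : addLeftEmbedding (Finsupp.single ((-i).toNat - 1) 1) γ'
        = Finsupp.single ((-i).toNat - 1) 1 + γ' := rfl
    rw [this, wdeg_add, wdeg_single, mul_one]
    have h1 := h γ' hγ'
    have h2 : (((-i).toNat - 1 : ℕ) : ℤ) + 1 = -i := by omega
    push_cast
    omega
  · subst hi
    rw [aZ_zero_op]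
    intro γ hγ
    simp at hγ
  · rw [aZ_of_nonneg hi.le]
    intro γ hγ
    have hγ' := MvPolynomial.support_smul hγ
    have h2 := WBZ_pderiv (k := i.toNat - 1) h γ hγ'
    have h3 : ((i.toNat - 1 : ℕ) : ℤ) + 1 = i := by omega
    omega

lemma WBZ_nop {P : A} {i j : ℤ} {Wt : ℤ} (h : WBZ P Wt) :
    WBZ (nop i j P) (Wt - i - j) := by
  unfold nop
  split
  · have := WBZ_aZ (i := i) (WBZ_aZ (i := j) h)
    exact WBZ_mono this (by omega)
  · have := WBZ_aZ (i := j) (WBZ_aZ (i := i) h)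
    exact WBZ_mono this (by omega)

lemma WBZ_add {P Q : A} {Wt : ℤ} (hP : WBZ P Wt) (hQ : WBZ Q Wt) : WBZ (P + Q) Wt := by
  intro γ hγ
  classical
  rcases Finset.mem_union.1 (MvPolynomial.support_add hγ) with hh | hh
  · exact hP γ hh
  · exact hQ γ hh

lemma WBZ_sum {α : Type*} {s : Finset α} {f : α → A} {Wt : ℤ}
    (h : ∀ x ∈ s, WBZ (f x) Wt) : WBZ (∑ x ∈ s, f x) Wt := by
  intro γ hγ
  classical
  obtain ⟨x, hx, hγx⟩ := Finset.mem_biUnion.1 (MvPolynomial.support_sum hγ)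
  exact h x hx γ hγx

lemma WBZ_LA {P : A} {Wt : ℤ} (ρ : ℂ) (n : ℤ) (h : WBZ P Wt) :
    WBZ (LA ρ n P) (Wt - n) := by
  obtain ⟨J, hJ⟩ := exists_good P
  rw [LA_eq_sum hJ ρ n]
  intro γ hγ
  rw [sub_eq_add_neg] at hγ
  classical
  rcases Finset.mem_union.1 (MvPolynomial.support_add hγ) with hh | hh
  · have hh' := MvPolynomial.support_smul hh
    refine WBZ_sum (fun i _ => ?_) γ hh'
    exact WBZ_mono (WBZ_nop h) (by omega)
  · rw [MvPolynomial.support_neg] at hh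
    have hh' := MvPolynomial.support_smul hh
    exact WBZ_mono (WBZ_aZ h) (by omega) γ hh'


-- ===================== the right-hand side submodule =====================

/-- allowed λ-exponents: nonnegative except possibly in the last slot. -/
def allowed (r : ℕ) (m : Fin r →₀ ℤ) : Prop :=
  ∀ j : Fin r, (j : ℕ) + 1 < r → 0 ≤ m j

/-- allowed Laurent polynomials. -/
def cond (r : ℕ) (f : (Fin r →₀ ℤ) →₀ A) : Prop := ∀ m ∈ f.support, allowed r m

lemma allowed_add_sng {r : ℕ} {m : Fin r →₀ ℤ} (h : allowed r m) (j : Fin r) :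
    allowed r (m + sng j) := by
  intro j' hj'
  rw [Finsupp.add_apply, sng_apply]
  have := h j' hj'
  split <;> omega

lemma cond_single {r : ℕ} {m : Fin r →₀ ℤ} (h : allowed r m) (P : A) :
    cond r (Finsupp.single m P) := by
  intro m' hm'
  have := Finsupp.support_single_subset hm'
  rw [Finset.mem_singleton] at this
  subst this
  exact h

/-- the right-hand side as a submodule. -/
def V0 (r : ℕ) : Submodule ℂ (W r) where
  carrier := {w | ∃ f, cond r f ∧ w = EmulW r f}
  add_mem' := by
    rintro a b ⟨f, hf, rfl⟩ ⟨g, hg, rfl⟩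
    refine ⟨f + g, fun m hm => ?_, (EmulW_add f g).symm⟩
    rcases Finset.mem_union.1 (Finsupp.support_add hm) with hh | hh
    · exact hf m hh
    · exact hg m hh
  zero_mem' := ⟨0, fun m hm => by simp at hm, EmulW_zero.symm⟩
  smul_mem' := by
    rintro c a ⟨f, hf, rfl⟩
    exact ⟨c • f, fun m hm => hf m (Finsupp.support_smul hm), (EmulW_smul c f).symm⟩

lemma mem_V0 {r : ℕ} {f : (Fin r →₀ ℤ) →₀ A} (hf : cond r f) : EmulW r f ∈ V0 r :=
  ⟨f, hf, rfl⟩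

lemma cond_GG {r : ℕ} (ρ : ℂ) (n : ℤ) {m : Fin r →₀ ℤ} (hm : allowed r m) (P : A) :
    cond r (GG r ρ n m P) := by
  intro m' hm'
  unfold GG at hm'
  rw [sub_eq_add_neg] at hm'
  rcases Finset.mem_union.1 (Finsupp.support_add hm') with hh | hh
  rotate_left
  · -- the G4 part
    rw [Finsupp.support_neg] at hh
    have hh2 := Finsupp.support_smul hh
    unfold G4 at hh2
    split at hh2
    · have := Finsupp.support_single_subset hh2
      rw [Finset.mem_singleton] at this
      subst this
      exact allowed_add_sng hm _
    · simp at hh2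
  rcases Finset.mem_union.1 (Finsupp.support_add hh) with hh1 | hh1
  rotate_left
  · -- the G3 sum
    have hh2 := Finsupp.support_smul hh1
    obtain ⟨j, _, hh3⟩ := Finset.mem_biUnion.1 (Finsupp.support_finset_sum hh2)
    unfold G3 at hh3
    split at hh3
    · have := Finsupp.support_single_subset hh3
      rw [Finset.mem_singleton] at this
      subst this
      exact allowed_add_sng (allowed_add_sng hm _) _
    · simp at hh3
  rcases Finset.mem_union.1 (Finsupp.support_add hh1) with hh2 | hh2
  · have := Finsupp.support_single_subset hh2
    rw [Finset.mem_singleton] at this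
    subst this
    exact hm
  · obtain ⟨j, _, hh3⟩ := Finset.mem_biUnion.1 (Finsupp.support_finset_sum hh2)
    have := Finsupp.support_single_subset hh3
    rw [Finset.mem_singleton] at this
    subst this
    exact allowed_add_sng hm _

/-- generic closure of `V0` under a linear operator that maps the basic
elements into `V0`. -/
lemma op_preserves_V0 {r : ℕ} (O : W r → W r)
    (hadd : ∀ v w, O (v + w) = O v + O w) (hzero : O 0 = 0)
    (hs : ∀ m (P : A), allowed r m → O (EmulW r (Finsupp.single m P)) ∈ V0 r) :
    ∀ w ∈ V0 r, O w ∈ V0 r := by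
  rintro w ⟨f, hf, rfl⟩
  have hOsum : ∀ (s : Finset (Fin r →₀ ℤ)) (v : (Fin r →₀ ℤ) → W r),
      O (∑ x ∈ s, v x) = ∑ x ∈ s, O (v x) := by
    intro s v
    classical
    induction s using Finset.induction_on with
    | empty => simpa using hzero
    | insert _ _ hx ih => rw [Finset.sum_insert hx, Finset.sum_insert hx, hadd, ih]
  have hf' : (∑ m ∈ f.support, Finsupp.single m (f m)) = f := Finsupp.sum_single f
  rw [← hf', EmulW_sum, hOsum]
  exact Submodule.sum_mem _ fun m hm => hs m (f m) (hf m hm)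

lemma LW_add {r : ℕ} (ρ : ℂ) (n : ℤ) (v w : W r) :
    LW r ρ n (v + w) = LW r ρ n v + LW r ρ n w := by
  funext d
  exact LA_add ρ n (v d) (w d)

lemma LW_zero {r : ℕ} (ρ : ℂ) (n : ℤ) : LW r ρ n (0 : W r) = 0 := by
  funext d
  exact LA_zero ρ n

lemma dLamW_add {r : ℕ} (j : Fin r) (v w : W r) :
    dLamW r j (v + w) = dLamW r j v + dLamW r j w := by
  funext d
  show _ • (v _ + w _) = _
  rw [smul_add]
  rfl

lemma dLamW_zero {r : ℕ} (j : Fin r) : dLamW r j (0 : W r) = 0 := by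
  funext d
  show _ • (0 : A) = 0
  rw [smul_zero]

lemma mulLamW_add {r : ℕ} (j : Fin r) (v w : W r) :
    mulLamW r j (v + w) = mulLamW r j v + mulLamW r j w := rfl

lemma mulLamInvW_add {r : ℕ} (j : Fin r) (v w : W r) :
    mulLamInvW r j (v + w) = mulLamInvW r j v + mulLamInvW r j w := rfl

lemma V0_LW {r : ℕ} (ρ : ℂ) (n : ℤ) : ∀ w ∈ V0 r, LW r ρ n w ∈ V0 r := by
  refine op_preserves_V0 _ (LW_add ρ n) (LW_zero ρ n) fun m P hm => ?_
  rw [LW_single]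
  exact mem_V0 (cond_GG ρ n hm P)

lemma V0_mulLamW {r : ℕ} (j : Fin r) : ∀ w ∈ V0 r, mulLamW r j w ∈ V0 r := by
  refine op_preserves_V0 _ (mulLamW_add j) rfl fun m P hm => ?_
  rw [mulLamW_single]
  exact mem_V0 (cond_single (allowed_add_sng hm j) P)

lemma V0_mulLamInvW {r : ℕ} (j : Fin r) (hj : ¬((j : ℕ) + 1 < r)) :
    ∀ w ∈ V0 r, mulLamInvW r j w ∈ V0 r := by
  refine op_preserves_V0 _ (mulLamInvW_add j) rfl fun m P hm => ?_
  rw [mulLamInvW_single]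
  refine mem_V0 (cond_single (fun j' hj' => ?_) P)
  rw [sub_sng_apply]
  have hne : j ≠ j' := fun hh => hj (hh ▸ hj')
  rw [if_neg hne, sub_zero]
  exact hm j' hj'

lemma V0_dLamW {r : ℕ} (j : Fin r) : ∀ w ∈ V0 r, dLamW r j w ∈ V0 r := by
  refine op_preserves_V0 _ (dLamW_add j) (dLamW_zero j) fun m P hm => ?_
  rw [dLamW_single]
  refine mem_V0 (fun m' hm' => ?_)
  rcases Finset.mem_union.1 (Finsupp.support_add hm') with hh | hh
  · have := Finsupp.support_single_subset hh
    rw [Finset.mem_singleton] at this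
    subst this
    exact hm
  · by_cases hmj : m j = 0
    · rw [hmj] at hh
      simp at hh
    · have hh2 := Finsupp.support_smul hh
      have := Finsupp.support_single_subset hh2
      rw [Finset.mem_singleton] at this
      subst this
      intro j' hj'
      rw [sub_sng_apply]
      have := hm j' hj'
      rcases eq_or_ne j j' with hje | hje
      · rw [if_pos hje]
        subst hje
        omega
      · rw [if_neg hje]
        omega

lemma V0_ephi {r : ℕ} : ephiW r ∈ V0 r := by
  rw [ephiW_eq]
  refine mem_V0 (cond_single (fun j hj => ?_) 1)
  rfl


-- ===================== generation: reaching all λ-monomials =====================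

section Generation

variable {r : ℕ} (hr : 1 ≤ r) (ρ : ℂ) (V : Submodule ℂ (W r))
  (hE : ephiW r ∈ V)
  (hL : ∀ n : ℤ, ∀ w ∈ V, LW r ρ n w ∈ V)
  (hD : ∀ j : Fin r, ∀ w ∈ V, dLamW r j w ∈ V)
  (hM : ∀ j : Fin r, ∀ w ∈ V, mulLamW r j w ∈ V)
  (hI : ∀ w ∈ V, mulLamInvW r (⟨r - 1, Nat.sub_lt hr Nat.one_pos⟩ : Fin r) w ∈ V)

include hr hE hM hI in
lemma reach : ∀ m, allowed r m → EmulW r (Finsupp.single m (1 : A)) ∈ V := by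
  suffices h : ∀ (N : ℕ) m, (∑ j : Fin r, (m j).natAbs) = N → allowed r m →
      EmulW r (Finsupp.single m (1 : A)) ∈ V by
    intro m hm
    exact h _ m rfl hm
  intro N
  induction N using Nat.strong_induction_on with
  | _ N IH =>
    intro m hN hm
    by_cases h0 : m = 0
    · subst h0
      rw [← ephiW_eq]
      exact hE
    · obtain ⟨j, hj⟩ : ∃ j, m j ≠ 0 := by
        by_contra hc
        push_neg at hc
        exact h0 (Finsupp.ext hc)
      rcases lt_or_gt_of_ne hj with hneg | hpos
      · -- m j < 0 : j must be the last index
        have hjlast : ¬((j : ℕ) + 1 < r) := fun h => by have := hm j h; omega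
        have hjval : (j : ℕ) = r - 1 := by have := j.isLt; omega
        have hjeq : j = (⟨r - 1, by omega⟩ : Fin r) := Fin.ext hjval
        set m' := m + sng j with hm'
        have hm'a : allowed r m' := by
          intro j' hj'
          rw [hm', Finsupp.add_apply, sng_apply]
          rcases eq_or_ne j j' with hje | hje
          · exact absurd (hje ▸ hj') hjlast
          · rw [if_neg hje]
            have := hm j' hj'
            omega
        have hsum : (∑ j' : Fin r, (m' j').natAbs) < N := by
          rw [← hN]
          refine Finset.sum_lt_sum (fun j' _ => ?_) ⟨j, Finset.mem_univ j, ?_⟩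
          · rw [hm', Finsupp.add_apply, sng_apply]
            rcases eq_or_ne j j' with hje | hje
            · subst hje
              rw [if_pos rfl]
              omega
            · rw [if_neg hje]
              omega
          · rw [hm', Finsupp.add_apply, sng_apply, if_pos rfl]
            omega
        have hmem := IH _ hsum m' rfl hm'a
        have := hI _ hmem
        rw [mulLamInvW_single] at this
        rw [hm'] at this
        rw [← hjeq] at this
        rw [add_sub_cancel_right] at this
        exact this
      · -- m j > 0
        set m' := m - sng j with hm'
        have hm'a : allowed r m' := by
          intro j' hj'
          rw [hm', sub_sng_apply]
          have := hm j' hj'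
          split
          next hje => subst hje; omega
          next => omega
        have hsum : (∑ j' : Fin r, (m' j').natAbs) < N := by
          rw [← hN]
          refine Finset.sum_lt_sum (fun j' _ => ?_) ⟨j, Finset.mem_univ j, ?_⟩
          · rw [hm', sub_sng_apply]
            split
            next hje => subst hje; omega
            next => omega
          · rw [hm', sub_sng_apply, if_pos rfl]
            omega
        have hmem := IH _ hsum m' rfl hm'a
        have := hM j _ hmem
        rw [mulLamW_single, hm', sub_add_cancel] at this
        exact this

include hr hE hL hD hM hI in
lemma key : ∀ (Wt : ℕ) (P : A), WBZ P (Wt : ℤ) → ∀ m, allowed r m →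
    EmulW r (Finsupp.single m P) ∈ V := by
  intro Wt
  induction Wt using Nat.strong_induction_on with
  | _ Wt IH =>
  have hmono : ∀ (α : ℕ →₀ ℕ) (c : ℂ), (wdeg α : ℤ) ≤ (Wt : ℤ) → ∀ m, allowed r m →
      EmulW r (Finsupp.single m (MvPolynomial.monomial α c)) ∈ V := by
    intro α c hα m hm
    by_cases hα0 : α = 0
    · subst hα0
      have h1 : (MvPolynomial.monomial (0 : ℕ →₀ ℕ) c : A) = c • 1 := by
        rw [← MvPolynomial.C_apply, MvPolynomial.smul_eq_C_mul, mul_one]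
      rw [h1, ← Finsupp.smul_single, EmulW_smul]
      exact Submodule.smul_mem V c (reach hr V hE hM hI m hm)
    · have hne : α.support.Nonempty := Finsupp.support_nonempty_iff.2 hα0
      set i0 := α.support.max' hne with hi0
      have hi0mem : i0 ∈ α.support := α.support.max'_mem hne
      have hαi0 : 1 ≤ α i0 := Nat.one_le_iff_ne_zero.2 (Finsupp.mem_support_iff.1 hi0mem)
      set β := α - Finsupp.single i0 1 with hβ
      have hαβ : α = Finsupp.single i0 1 + β := by
        ext i
        rw [Finsupp.add_apply, hβ, Finsupp.tsub_apply]
        rcases eq_or_ne i0 i with hh | hh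
        · subst hh
          rw [Finsupp.single_eq_same]
          omega
        · rw [Finsupp.single_eq_of_ne' hh]
          omega
      have hwα : wdeg α = (i0 + 1) + wdeg β := by
        conv_lhs => rw [hαβ]
        rw [wdeg_add, wdeg_single, mul_one]
      have hmon : (MvPolynomial.monomial α c : A)
          = MvPolynomial.X i0 * MvPolynomial.monomial β c := by
        conv_lhs => rw [hαβ]
        rw [MvPolynomial.monomial_single_add, pow_one]
      have hWt1 : 1 ≤ Wt := by omega
      have hlt : Wt - 1 < Wt := by omega
      have hQβ : WBZ (MvPolynomial.monomial β c) (((Wt - 1 : ℕ) : ℤ)) :=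
        WBZ_monomial (by omega)
      have hQmem : ∀ m', allowed r m' →
          EmulW r (Finsupp.single m' (MvPolynomial.monomial β c)) ∈ V :=
        fun m' hm' => IH (Wt - 1) hlt _ hQβ m' hm'
      by_cases hcase : i0 + 1 ≤ r
      · -- use ∂/∂λ_{i0+1}
        set j : Fin r := ⟨i0, by omega⟩ with hj
        have h2 := hD j _ (hQmem m hm)
        rw [dLamW_single, EmulW_add] at h2
        have h3 : EmulW r (((m j : ℤ) : ℂ) •
            Finsupp.single (m - sng j) (MvPolynomial.monomial β c)) ∈ V := by
          rw [EmulW_smul]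
          by_cases hmj : m j = 0
          · rw [hmj]
            simp
          · refine Submodule.smul_mem V _ (IH (Wt - 1) hlt _ hQβ (m - sng j) ?_)
            intro j' hj'
            rw [sub_sng_apply]
            have := hm j' hj'
            rcases eq_or_ne j j' with hje | hje
            · rw [if_pos hje]
              subst hje
              omega
            · rw [if_neg hje]
              omega
        have h4 : EmulW r (Finsupp.single m ((((j : ℕ) : ℂ) + 1)⁻¹ •
            (MvPolynomial.X (j : ℕ) * MvPolynomial.monomial β c))) ∈ V := by
          have h5 := Submodule.sub_mem V h2 h3
          rw [add_sub_cancel_right] at h5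
          exact h5
        have h6 := Submodule.smul_mem V ((((j : ℕ) : ℂ) + 1)) h4
        rw [← EmulW_smul, Finsupp.smul_single, smul_smul,
          mul_inv_cancel₀ (Nat.cast_add_one_ne_zero (j : ℕ)), one_smul] at h6
        rw [hmon]
        have hji : (j : ℕ) = i0 := rfl
        rw [hji] at h6
        exact h6
      · -- use L_n with n = r - (i0+1) < 0
        set Q : A := MvPolynomial.monomial β c with hQ
        set n : ℤ := (r : ℤ) - ((i0 : ℤ) + 1) with hn
        have hnneg : n ≤ -1 := by omega
        set jr : Fin r := ⟨r - 1, by omega⟩ with hjr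
        have hI' : ∀ w ∈ V, mulLamInvW r jr w ∈ V := hI
        have h1 := hL n _ (hQmem m hm)
        rw [LW_single] at h1
        have hG3 : ∀ j : Fin r, G3 r n m Q j = 0 := by
          intro j
          unfold G3
          rw [dif_neg]
          rintro ⟨ha, -⟩
          omega
        have hG4 : G4 r n m Q = 0 := by
          unfold G4
          rw [dif_neg]
          rintro ⟨ha, -⟩
          omega
        have hGG : GG r ρ n m Q
            = Finsupp.single m (LA ρ n Q)
              + ∑ j : Fin r, Finsupp.single (m + sng j) (aZ (n - (((j : ℕ) : ℤ) + 1)) Q) := by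
          unfold GG
          rw [Finset.sum_congr rfl (fun j _ => hG3 j), hG4]
          simp
        rw [hGG, EmulW_add, EmulW_sum] at h1
        have hLAmem : EmulW r (Finsupp.single m (LA ρ n Q)) ∈ V := by
          refine IH (Wt - 1) hlt _ ?_ m hm
          refine WBZ_mono (WBZ_LA ρ n (WBZ_monomial (le_refl _))) ?_
          omega
        have hothers : ∀ j ∈ Finset.univ.erase jr,
            EmulW r (Finsupp.single (m + sng j) (aZ (n - (((j : ℕ) : ℤ) + 1)) Q)) ∈ V := by
          intro j hjmem
          have hjne : (j : ℕ) < r - 1 := by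
            have hne0 := (Finset.mem_erase.1 hjmem).1
            have hlt0 := j.isLt
            have : (j : ℕ) ≠ r - 1 := fun hh => hne0 (Fin.ext hh)
            omega
          have hneg : n - (((j : ℕ) : ℤ) + 1) < 0 := by omega
          rw [aZ_of_neg hneg]
          have hidx : ((-(n - (((j : ℕ) : ℤ) + 1))).toNat - 1) = i0 + 1 - r + (j : ℕ) := by
            omega
          rw [hidx, hQ,
            show (MvPolynomial.X (i0 + 1 - r + (j : ℕ)) * MvPolynomial.monomial β c : A)
              = MvPolynomial.monomial (Finsupp.single (i0 + 1 - r + (j : ℕ)) 1 + β) c by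
              rw [MvPolynomial.monomial_single_add, pow_one]]
          refine IH (Wt - 1) hlt _ ?_ _ (allowed_add_sng hm j)
          refine WBZ_monomial ?_
          rw [wdeg_add, wdeg_single, mul_one]
          push_cast
          omega
        have hsumO := Submodule.sum_mem V hothers
        have hsum_mem : (∑ j : Fin r,
            EmulW r (Finsupp.single (m + sng j) (aZ (n - (((j : ℕ) : ℤ) + 1)) Q))) ∈ V := by
          have h7 := Submodule.sub_mem V h1 hLAmem
          rw [add_sub_cancel_left] at h7
          exact h7
        rw [← Finset.add_sum_erase _ _ (Finset.mem_univ jr)] at hsum_mem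
        have htop := Submodule.sub_mem V hsum_mem hsumO
        rw [add_sub_cancel_right] at htop
        have hidx2 : n - (((jr : ℕ) : ℤ) + 1) = -((i0 : ℤ) + 1) := by
          have hval : (jr : ℕ) = r - 1 := rfl
          rw [hval]
          omega
        rw [hidx2, aZ_of_neg (by omega : (-((i0 : ℤ) + 1) : ℤ) < 0)] at htop
        have hidx3 : (-(-((i0 : ℤ) + 1))).toNat - 1 = i0 := by omega
        rw [hidx3, hQ, ← hmon] at htop
        have hfinal := hI' _ htop
        rw [mulLamInvW_single, add_sub_cancel_right] at hfinal
        exact hfinal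
  intro P hP m hm
  have hPdecomp : Finsupp.single m (∑ v ∈ P.support,
      MvPolynomial.monomial v (MvPolynomial.coeff v P))
      = ∑ v ∈ P.support, Finsupp.single m (MvPolynomial.monomial v (MvPolynomial.coeff v P)) :=
    map_sum (Finsupp.singleAddHom m) _ _
  rw [P.as_sum, hPdecomp, EmulW_sum]
  exact Submodule.sum_mem V fun v hv => hmono v _ (hP v hv) m hm

end Generation

end Aux
theorem statement13 (r : ℕ) (hr : 1 ≤ r) (ρ : ℂ) :
    sInf {V : Submodule ℂ (W r) |
        ephiW r ∈ V ∧
        (∀ n : ℤ, ∀ w ∈ V, LW r ρ n w ∈ V) ∧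
        (∀ j : Fin r, ∀ w ∈ V, dLamW r j w ∈ V) ∧
        (∀ j : Fin r, ∀ w ∈ V, mulLamW r j w ∈ V) ∧
        (∀ w ∈ V, mulLamInvW r (⟨r - 1, by omega⟩ : Fin r) w ∈ V)}
      = Submodule.span ℂ
          {w : W r | ∃ f : (Fin r →₀ ℤ) →₀ A,
            (∀ m ∈ f.support, ∀ j : Fin r, (j : ℕ) + 1 < r → 0 ≤ m j) ∧
            w = EmulW r f} := by
  have hset : {w : W r | ∃ f : (Fin r →₀ ℤ) →₀ A,
      (∀ m ∈ f.support, ∀ j : Fin r, (j : ℕ) + 1 < r → 0 ≤ m j) ∧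
      w = EmulW r f} = ↑(Aux.V0 r) := rfl
  apply le_antisymm
  · rw [hset, Submodule.span_eq]
    apply sInf_le
    refine ⟨Aux.V0_ephi, fun n => Aux.V0_LW ρ n, fun j => Aux.V0_dLamW j,
      fun j => Aux.V0_mulLamW j,
      Aux.V0_mulLamInvW (⟨r - 1, by omega⟩ : Fin r) (by show ¬(r - 1 + 1 < r); omega)⟩
  · rw [Submodule.span_le]
    intro w hw
    rw [SetLike.mem_coe, Submodule.mem_sInf]
    rintro V ⟨hE, hL, hD, hM, hI⟩
    obtain ⟨f, hf, rfl⟩ := hw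
    have hf' : (∑ m ∈ f.support, Finsupp.single m (f m)) = f := Finsupp.sum_single f
    rw [← hf', Aux.EmulW_sum]
    refine Submodule.sum_mem V fun m hm => ?_
    obtain ⟨Wt, hWt⟩ := Aux.WBZ_exists (f m)
    exact Aux.key hr ρ V hE hL hD hM hI Wt (f m) hWt m (hf m hm)

end
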